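/- Let x₁ and x₂ be real-valued random variables on the same probability space (possibly dependent) with x₁ ~ subW(θ₁, ν₁) and x₂ ~ subW(θ₂, ν₂), where θ₁, θ₂ > 0. Then x₁ x₂ ~ subW(θ₁ + θ₂, c(θ₁, θ₂) ν₁ ν₂), where c(θ₁, θ₂) := (θ₁ + θ₂)^{θ₁ + θ₂} / (θ₁^{θ₁} θ₂^{θ₂}); that is, ‖x₁ x₂‖_k ≤ c(θ₁, θ₂) ν₁ ν₂ k^{θ₁ + θ₂} for all real k ≥ 1. -/

import Mathlib

open MeasureTheory ProbabilityTheory Real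
open scoped ENNReal

private lemma memLp_abs_rpow_aux {Ω : Type*} [MeasurableSpace Ω] (μ : Measure Ω)
    (x : Ω → ℝ) (hx : Measurable x) {k p : ℝ} (hk : 0 < k) (hp : 0 < p)
    (hint : Integrable (fun ω => |x ω| ^ (k * p)) μ) :
    MemLp (fun ω => |x ω| ^ k) (ENNReal.ofReal p) μ := by
  have A : ENNReal.ofReal (1 / p) ≠ 0 := by
    rw [Ne, ENNReal.ofReal_eq_zero, not_le]; positivity
  have B : ENNReal.ofReal (1 / p) ≠ ⊤ := ENNReal.ofReal_ne_top
  have hFm : AEStronglyMeasurable (fun ω => |x ω| ^ (k * p)) μ := by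
    apply Measurable.aestronglyMeasurable; fun_prop
  have h := (memLp_norm_rpow_iff (p := 1) hFm A B).mpr (memLp_one_iff_integrable.mpr hint)
  have hq : (1 : ℝ≥0∞) / ENNReal.ofReal (1 / p) = ENNReal.ofReal p := by
    rw [one_div, ← ENNReal.ofReal_inv_of_pos (by positivity), one_div, inv_inv]
  rw [hq] at h
  convert h using 1
  funext ω
  rw [ENNReal.toReal_ofReal (by positivity), Real.norm_eq_abs,
    abs_of_nonneg (Real.rpow_nonneg (abs_nonneg _) _), ← Real.rpow_mul (abs_nonneg _)]
  congr 1
  field_simp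

/-- **Closure of the sub-Weibull class under products (possibly dependent factors).**
If `x₁ ~ subW(θ₁, ν₁)` and `x₂ ~ subW(θ₂, ν₂)` with `θ₁, θ₂ > 0` (possibly dependent), then
`x₁ x₂ ~ subW(θ₁ + θ₂, c(θ₁,θ₂) ν₁ ν₂)` with
`c(θ₁,θ₂) = (θ₁+θ₂)^(θ₁+θ₂) / (θ₁^θ₁ θ₂^θ₂)`. -/
theorem subWeibull_mul_dep
    {Ω : Type*} [MeasurableSpace Ω] (μ : Measure Ω) [IsProbabilityMeasure μ]
    (x₁ x₂ : Ω → ℝ) (hx₁ : Measurable x₁) (hx₂ : Measurable x₂)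
    (θ₁ θ₂ ν₁ ν₂ : ℝ) (hθ₁ : 0 < θ₁) (hθ₂ : 0 < θ₂) (hν₁ : 0 < ν₁) (hν₂ : 0 < ν₂)
    (hmom₁ : ∀ k : ℝ, 1 ≤ k → Integrable (fun ω => |x₁ ω| ^ k) μ)
    (hmom₂ : ∀ k : ℝ, 1 ≤ k → Integrable (fun ω => |x₂ ω| ^ k) μ)
    (hsw₁ : ∀ k : ℝ, 1 ≤ k → (∫ ω, |x₁ ω| ^ k ∂μ) ^ (1 / k) ≤ ν₁ * k ^ θ₁)
    (hsw₂ : ∀ k : ℝ, 1 ≤ k → (∫ ω, |x₂ ω| ^ k ∂μ) ^ (1 / k) ≤ ν₂ * k ^ θ₂) :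
    ∀ k : ℝ, 1 ≤ k →
      (∫ ω, |x₁ ω * x₂ ω| ^ k ∂μ) ^ (1 / k)
        ≤ ((θ₁ + θ₂) ^ (θ₁ + θ₂) / (θ₁ ^ θ₁ * θ₂ ^ θ₂)) * ν₁ * ν₂ * k ^ (θ₁ + θ₂) := by
  intro k hk
  have hk0 : 0 < k := lt_of_lt_of_le one_pos hk
  set s : ℝ := θ₁ + θ₂ with hs
  have hs0 : 0 < s := by positivity
  set p : ℝ := s / θ₁ with hpdef
  set q : ℝ := s / θ₂ with hqdef
  have hp1 : 1 < p := by
    rw [hpdef, lt_div_iff₀ hθ₁]; simpa [hs] using hθ₂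
  have hq1 : 1 < q := by
    rw [hqdef, lt_div_iff₀ hθ₂]; simpa [hs] using hθ₁
  have hp0 : 0 < p := lt_trans one_pos hp1
  have hq0 : 0 < q := lt_trans one_pos hq1
  have hpq : p.HolderConjugate q := by
    rw [Real.holderConjugate_iff]
    constructor
    · exact hp1
    · rw [hpdef, hqdef]
      field_simp
      exact hs.symm
  have hkp1 : 1 ≤ k * p := one_le_mul_of_one_le_of_one_le hk hp1.le
  have hkq1 : 1 ≤ k * q := one_le_mul_of_one_le_of_one_le hk hq1.le
  have hmem₁ : MemLp (fun ω => |x₁ ω| ^ k) (ENNReal.ofReal p) μ :=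
    memLp_abs_rpow_aux μ x₁ hx₁ hk0 hp0 (hmom₁ _ hkp1)
  have hmem₂ : MemLp (fun ω => |x₂ ω| ^ k) (ENNReal.ofReal q) μ :=
    memLp_abs_rpow_aux μ x₂ hx₂ hk0 hq0 (hmom₂ _ hkq1)
  have holder := integral_mul_le_Lp_mul_Lq_of_nonneg hpq
    (Filter.Eventually.of_forall fun ω => Real.rpow_nonneg (abs_nonneg _) _)
    (Filter.Eventually.of_forall fun ω => Real.rpow_nonneg (abs_nonneg _) _)
    hmem₁ hmem₂
  -- rewrite integrands
  have e0 : ∫ ω, |x₁ ω * x₂ ω| ^ k ∂μ = ∫ ω, (|x₁ ω| ^ k) * (|x₂ ω| ^ k) ∂μ := by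
    congr 1; funext ω
    rw [abs_mul, Real.mul_rpow (abs_nonneg _) (abs_nonneg _)]
  have e1 : ∫ ω, (|x₁ ω| ^ k) ^ p ∂μ = ∫ ω, |x₁ ω| ^ (k * p) ∂μ := by
    congr 1; funext ω; rw [← Real.rpow_mul (abs_nonneg _)]
  have e2 : ∫ ω, (|x₂ ω| ^ k) ^ q ∂μ = ∫ ω, |x₂ ω| ^ (k * q) ∂μ := by
    congr 1; funext ω; rw [← Real.rpow_mul (abs_nonneg _)]
  rw [e1, e2] at holder
  rw [e0]
  set A : ℝ := ∫ ω, |x₁ ω| ^ (k * p) ∂μ with hA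
  set B : ℝ := ∫ ω, |x₂ ω| ^ (k * q) ∂μ with hB
  have hA0 : 0 ≤ A := integral_nonneg fun ω => Real.rpow_nonneg (abs_nonneg _) _
  have hB0 : 0 ≤ B := integral_nonneg fun ω => Real.rpow_nonneg (abs_nonneg _) _
  have hI0 : 0 ≤ ∫ ω, (|x₁ ω| ^ k) * (|x₂ ω| ^ k) ∂μ :=
    integral_nonneg fun ω => mul_nonneg (Real.rpow_nonneg (abs_nonneg _) _)
      (Real.rpow_nonneg (abs_nonneg _) _)
  have step1 : (∫ ω, (|x₁ ω| ^ k) * (|x₂ ω| ^ k) ∂μ) ^ (1 / k)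
      ≤ (A ^ (1 / p) * B ^ (1 / q)) ^ (1 / k) :=
    Real.rpow_le_rpow hI0 holder (by positivity)
  have step2 : (A ^ (1 / p) * B ^ (1 / q)) ^ (1 / k)
      = A ^ (1 / (k * p)) * B ^ (1 / (k * q)) := by
    rw [Real.mul_rpow (Real.rpow_nonneg hA0 _) (Real.rpow_nonneg hB0 _),
      ← Real.rpow_mul hA0, ← Real.rpow_mul hB0]
    congr 2 <;> field_simp <;> ring
  have hb1 : A ^ (1 / (k * p)) ≤ ν₁ * (k * p) ^ θ₁ := hsw₁ _ hkp1
  have hb2 : B ^ (1 / (k * q)) ≤ ν₂ * (k * q) ^ θ₂ := hsw₂ _ hkq1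
  have step3 : A ^ (1 / (k * p)) * B ^ (1 / (k * q))
      ≤ (ν₁ * (k * p) ^ θ₁) * (ν₂ * (k * q) ^ θ₂) :=
    mul_le_mul hb1 hb2 (Real.rpow_nonneg hB0 _)
      (le_trans (Real.rpow_nonneg hA0 _) hb1)
  have final : (ν₁ * (k * p) ^ θ₁) * (ν₂ * (k * q) ^ θ₂)
      = (s ^ s / (θ₁ ^ θ₁ * θ₂ ^ θ₂)) * ν₁ * ν₂ * k ^ s := by
    rw [Real.mul_rpow hk0.le hp0.le, Real.mul_rpow hk0.le hq0.le,
      hpdef, hqdef, Real.div_rpow hs0.le hθ₁.le, Real.div_rpow hs0.le hθ₂.le]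
    have hks : k ^ s = k ^ θ₁ * k ^ θ₂ := by rw [hs, Real.rpow_add hk0]
    have hss : s ^ s = s ^ θ₁ * s ^ θ₂ := by rw [hs, Real.rpow_add hs0]
    rw [hks, hss]
    field_simp
  calc (∫ ω, (|x₁ ω| ^ k) * (|x₂ ω| ^ k) ∂μ) ^ (1 / k)
      ≤ A ^ (1 / (k * p)) * B ^ (1 / (k * q)) := by rw [← step2]; exact step1
    _ ≤ (ν₁ * (k * p) ^ θ₁) * (ν₂ * (k * q) ^ θ₂) := step3
    _ = _ := final
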